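/- In the binary toy model of the previous context, with the same parameters: the true average treatment effect satisfies ATE = α_A + α_{AU}·E[U], while the confounded contrast satisfies Δ_confounded := E[ δ^Y_A(Z) ] = α_A + E[γ_A + γ_{AZ}Z]·(α_U + α_{AU}) + α_{AU}·E[γ₀ + γ_Z Z], and the bias term Δ_bias := E[ δ^W_A(Z)·R(1−A) ] = E[γ_A + γ_{AZ}Z]·(α_U + α_{AU}) − α_{AU}·E[(γ_A + γ_{AZ}Z)A]. Consequently Δ_confounded − Δ_bias = α_A + α_{AU}·E[(γ₀ + γ_Z Z) + (γ_A + γ_{AZ}Z)A] = ATE, using E[U] = E[(γ₀+γ_Z Z) + (γ_A+γ_{AZ}Z)A]. -/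

import Mathlib

/-- Real-valued indicator of a Boolean. -/
noncomputable def ind (b : Bool) : ℝ := if b then 1 else 0

/-- Binary toy model decomposition Δ = Δ_confounded − Δ_bias: with
`E[Y|A,Z,U] = α₀ + α_A A + α_U U + α_{AU} AU`, `E[W|A,Z,U] = β₀ + β_U U` (β_U ≠ 0),
`E[U|A,Z] = γ₀ + γ_A A + γ_Z Z + γ_{AZ} AZ`, joint pmf `p` of `(A,Z)`,
`R(a) = (α_U + α_{AU} a)/β_U`, `ATE = α_A + α_{AU} E[U]`, one has the stated formulas for
`Δ_confounded = E[δ^Y_A(Z)]`, `Δ_bias = E[δ^W_A(Z)·R(1−A)]`, and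
`Δ_confounded − Δ_bias = ATE`. -/
theorem toy_model_decomposition
    (α0 αA αU αAU β0 βU γ0 γA γZ γAZ : ℝ) (hβ : βU ≠ 0)
    (p : Bool → Bool → ℝ) (hp : ∀ a z, 0 ≤ p a z)
    (hpsum : ∑ a : Bool, ∑ z : Bool, p a z = 1)
    (EU EY EW : Bool → Bool → ℝ)   -- indexed by (a, z)
    (hEU : ∀ a z, EU a z = γ0 + γA * ind a + γZ * ind z + γAZ * ind a * ind z)
    (hEY : ∀ a z, EY a z = α0 + αA * ind a + (αU + αAU * ind a) * EU a z)
    (hEW : ∀ a z, EW a z = β0 + βU * EU a z)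
    (R : Bool → ℝ) (hR : ∀ a, R a = (αU + αAU * ind a) / βU)
    (ATE : ℝ) (hATE : ATE = αA + αAU * ∑ a : Bool, ∑ z : Bool, p a z * EU a z) :
    -- Δ_confounded = α_A + E[γ_A + γ_{AZ} Z](α_U + α_{AU}) + α_{AU} E[γ₀ + γ_Z Z]
    (∑ a : Bool, ∑ z : Bool, p a z * (EY true z - EY false z)
      = αA + (∑ a : Bool, ∑ z : Bool, p a z * (γA + γAZ * ind z)) * (αU + αAU)
          + αAU * ∑ a : Bool, ∑ z : Bool, p a z * (γ0 + γZ * ind z))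
    ∧
    -- Δ_bias = E[γ_A + γ_{AZ} Z](α_U + α_{AU}) − α_{AU} E[(γ_A + γ_{AZ} Z) A]
    (∑ a : Bool, ∑ z : Bool, p a z * ((EW true z - EW false z) * R (!a))
      = (∑ a : Bool, ∑ z : Bool, p a z * (γA + γAZ * ind z)) * (αU + αAU)
          - αAU * ∑ a : Bool, ∑ z : Bool, p a z * (γA + γAZ * ind z) * ind a)
    ∧
    -- Δ_confounded − Δ_bias = α_A + α_{AU} E[(γ₀ + γ_Z Z) + (γ_A + γ_{AZ} Z) A] = ATE
    ((∑ a : Bool, ∑ z : Bool, p a z * (EY true z - EY false z))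
        - ∑ a : Bool, ∑ z : Bool, p a z * ((EW true z - EW false z) * R (!a))
      = αA + αAU * ∑ a : Bool, ∑ z : Bool,
          p a z * ((γ0 + γZ * ind z) + (γA + γAZ * ind z) * ind a)
      ∧
      (∑ a : Bool, ∑ z : Bool, p a z * (EY true z - EY false z))
        - (∑ a : Bool, ∑ z : Bool, p a z * ((EW true z - EW false z) * R (!a)))
      = ATE) := by
  have hs : p true true + p true false + (p false true + p false false) = 1 := by
    simpa [Fintype.sum_bool] using hpsum
  simp only [Fintype.sum_bool, hEY, hEW, hEU, hR, hATE, ind, Bool.not_true, Bool.not_false,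
    if_true, if_false]
  norm_num
  refine ⟨by linear_combination αA * hs,
    by field_simp; ring,
    by field_simp; linear_combination αA * hs,
    by field_simp; linear_combination αA * hs⟩
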